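/- Existence of the decoding matrix V_dec: Let F be a finite field, let K ≥ 1, N ≥ 1, l ≥ 1 be integers with |F| > K·l, let r : Fin K → ℕ, and for each k ∈ Fin K let U_k ∈ F^{N × r(k)} be a matrix of full column rank r(k) and V'_k ∈ F^{r(k) × l} a matrix of full column rank l. Then there exists a matrix V_dec ∈ F^{l × N} such that for every k ∈ Fin K, the l × l matrix V_dec * U_k * V'_k is invertible. -/
import Mathlib

open Matrix Polynomial

lemma ker_mulVecLin_eq_bot_of_rank {F : Type*} [Field F] {m n : ℕ}
    (M : Matrix (Fin m) (Fin n) F) (h : M.rank = n) :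
    LinearMap.ker M.mulVecLin = ⊥ := by
  have h1 := M.mulVecLin.finrank_range_add_finrank_ker
  rw [Module.finrank_fintype_fun_eq_card, Fintype.card_fin] at h1
  rw [Matrix.rank] at h
  rw [← Submodule.finrank_eq_zero (S := LinearMap.ker M.mulVecLin)]
  omega

lemma exists_left_inverse_of_rank {F : Type*} [Field F] {m n : ℕ}
    (M : Matrix (Fin m) (Fin n) F) (h : M.rank = n) :
    ∃ B : Matrix (Fin n) (Fin m) F, B * M = 1 := by
  obtain ⟨g, hg⟩ := M.mulVecLin.exists_leftInverse_of_injective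
    (ker_mulVecLin_eq_bot_of_rank M h)
  refine ⟨LinearMap.toMatrix' g, ?_⟩
  have h3 : LinearMap.toMatrix' (g.comp M.mulVecLin)
      = LinearMap.toMatrix' g * LinearMap.toMatrix' M.mulVecLin :=
    LinearMap.toMatrix'_comp _ _
  rw [hg, LinearMap.toMatrix'_id, ← Matrix.toLin'_apply', LinearMap.toMatrix'_toLin'] at h3
  exact h3.symm

lemma eval_det_X_smul_add {F : Type*} [Field F] {n : ℕ}
    (A B : Matrix (Fin n) (Fin n) F) (t : F) :
    Polynomial.eval t (Matrix.det ((X : F[X]) • A.map C + B.map C)) =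
      Matrix.det (t • A + B) := by
  rw [← Polynomial.coe_evalRingHom, RingHom.map_det]
  congr 1
  ext i j
  simp only [RingHom.mapMatrix_apply, Matrix.map_apply, Matrix.add_apply, Matrix.smul_apply,
    smul_eq_mul, Polynomial.coe_evalRingHom, Polynomial.eval_add, Polynomial.eval_mul,
    Polynomial.eval_X, Polynomial.eval_C]

/-- **Existence of the decoding matrix V_dec.** Let `F` be a finite field with
`|F| > K·l`, and for each `k` let `U k` be an `N × r k` matrix of full column
rank `r k` and `V' k` an `r k × l` matrix of full column rank `l`. Then there
exists an `l × N` matrix `Vdec` such that `Vdec * U k * V' k` is an invertible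
`l × l` matrix for every `k`. -/
theorem exists_decoding_matrix_Vdec
    (F : Type*) [Field F] [Fintype F] [DecidableEq F]
    (K N l : ℕ) (hK : 1 ≤ K) (hN : 1 ≤ N) (hl : 1 ≤ l)
    (hq : Fintype.card F > K * l)
    (r : Fin K → ℕ)
    (U : (k : Fin K) → Matrix (Fin N) (Fin (r k)) F)
    (hU : ∀ k, (U k).rank = r k)
    (V' : (k : Fin K) → Matrix (Fin (r k)) (Fin l) F)
    (hV' : ∀ k, (V' k).rank = l) :
    ∃ Vdec : Matrix (Fin l) (Fin N) F,
      ∀ k : Fin K, IsUnit (Vdec * U k * V' k) := by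
  set M : Fin K → Matrix (Fin N) (Fin l) F := fun k => U k * V' k with hM
  -- each M k has full column rank l
  have hrank : ∀ k, (M k).rank = l := by
    intro k
    have hinj : Function.Injective (U k).mulVecLin :=
      LinearMap.ker_eq_bot.mp (ker_mulVecLin_eq_bot_of_rank (U k) (hU k))
    have e := (Submodule.equivMapOfInjective (U k).mulVecLin hinj
      (LinearMap.range (V' k).mulVecLin)).finrank_eq
    rw [Matrix.rank, hM, Matrix.mulVecLin_mul, LinearMap.range_comp, ← e]
    exact hV' k
  -- key induction: can handle the first m matrices
  have main : ∀ m : ℕ, m ≤ K → ∃ Vdec : Matrix (Fin l) (Fin N) F,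
      ∀ k : Fin K, (k : ℕ) < m → IsUnit (Vdec * M k) := by
    intro m
    induction m with
    | zero => exact fun _ => ⟨0, fun k hk => absurd hk (Nat.not_lt_zero _)⟩
    | succ m ih =>
      intro hmK
      obtain ⟨Vdec, hVdec⟩ := ih (Nat.le_of_succ_le hmK)
      set km : Fin K := ⟨m, hmK⟩ with hkm
      obtain ⟨B, hB⟩ := exists_left_inverse_of_rank (M km) (hrank km)
      -- the polynomial family
      set Q : Fin K → Polynomial F := fun j =>
        Matrix.det ((X : F[X]) • (B * M j).map C + (Vdec * M j).map C) with hQ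
      -- each relevant Q j is nonzero
      have hQne : ∀ j : Fin K, (j : ℕ) ≤ m → Q j ≠ 0 := by
        intro j hj
        rcases lt_or_eq_of_le hj with hj | hj
        · intro h0
          have h1 : (Q j).coeff 0 = (Vdec * M j).det :=
            coeff_det_X_add_C_zero (B * M j) (Vdec * M j)
          rw [h0, Polynomial.coeff_zero] at h1
          exact ((Matrix.isUnit_iff_isUnit_det _).mp (hVdec j hj)).ne_zero h1.symm
        · have hje : j = km := Fin.ext hj
          intro h0
          have h2 : (Q j).coeff (Fintype.card (Fin l)) = (B * M j).det :=
            coeff_det_X_add_C_card (B * M j) (Vdec * M j)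
          rw [h0, Polynomial.coeff_zero, hje, hB] at h2
          simp at h2
      -- degree bound
      have hQdeg : ∀ j : Fin K, (Q j).natDegree ≤ l := by
        intro j
        simpa only [Fintype.card_fin] using
          natDegree_det_X_add_C_le (B * M j) (Vdec * M j)
      -- bad set of parameters
      set bad : Finset F := Finset.univ.biUnion
        (fun j : Fin K => (Q j).roots.toFinset) with hbad
      have hcard : bad.card < Fintype.card F := by
        calc bad.card ≤ ∑ j : Fin K, (Q j).roots.toFinset.card :=
              Finset.card_biUnion_le
          _ ≤ ∑ _j : Fin K, l := by
              refine Finset.sum_le_sum fun j _ => ?_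
              exact (Multiset.toFinset_card_le _).trans
                ((Polynomial.card_roots' _).trans (hQdeg j))
          _ = K * l := by simp [Finset.sum_const, mul_comm]
          _ < Fintype.card F := hq
      obtain ⟨t, ht⟩ : ∃ t : F, t ∉ bad := by
        by_contra h
        push_neg at h
        have : bad = Finset.univ := Finset.eq_univ_iff_forall.mpr h
        rw [this, Finset.card_univ] at hcard
        exact lt_irrefl _ hcard
      refine ⟨Vdec + t • B, fun k hk => ?_⟩
      have hk' : (k : ℕ) ≤ m := Nat.lt_succ_iff.mp hk
      have htk : t ∉ (Q k).roots.toFinset := fun h =>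
        ht (Finset.mem_biUnion.mpr ⟨k, Finset.mem_univ _, h⟩)
      have hne : Polynomial.eval t (Q k) ≠ 0 := by
        intro h0
        exact htk (Multiset.mem_toFinset.mpr
          (Polynomial.mem_roots'.mpr ⟨hQne k hk', h0⟩))
      rw [hQ] at hne
      rw [eval_det_X_smul_add] at hne
      have heq : (Vdec + t • B) * M k = t • (B * M k) + Vdec * M k := by
        rw [Matrix.add_mul, Matrix.smul_mul, add_comm]
      rw [Matrix.isUnit_iff_isUnit_det, heq]
      exact isUnit_iff_ne_zero.mpr hne
  obtain ⟨Vdec, hVdec⟩ := main K le_rfl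
  exact ⟨Vdec, fun k => by rw [Matrix.mul_assoc]; exact hVdec k k.isLt⟩
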